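/- arXiv:1602.07978 — 4 statements merged into one kernel-verified Lean document; each statement's English description precedes it below -/
import Mathlib

section
/- Let x_1, …, x_k be i.i.d. Pareto random variables with complementary CDF P(x_1 ≥ x) = x^{−α} for x ≥ 1 (and = 1 for x < 1), where kα > 1. Then k·E[min{x_1, …, x_k}] = k + k/(kα − 1) = k²α/(kα − 1). Moreover, there exists α_0 > 1 such that for all α ∈ (1, α_0) and every integer k ≥ 1 with k ≠ 2: 4α/(2α − 1) < k²α/(kα − 1); i.e., for Pareto service times with shape parameter sufficiently close to 1, the map k ↦ k·E[min{x_1,…,x_k}] attains its strict minimum at k = 2, so strict Partial-Replication yields a strictly larger stability region than both No-Replication and any other replication factor. -/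
open MeasureTheory ProbabilityTheory Real Set

/-- **Pareto service times: strict Partial-Replication can be best.**
Let `x 0, x 1, …` be i.i.d. Pareto random variables with survival function
`P(x i ≥ s) = s^(−α)` for `s ≥ 1` (and `x i ≥ 1` a.s.).  Then, whenever
`k * α > 1`, `k * E[min {x 0, …, x (k−1)}] = k + k/(k*α − 1) = k²α/(k*α − 1)`.
Moreover there is `α₀ > 1` such that for every shape parameter `β ∈ (1, α₀)`
the map `k ↦ k²β/(k*β − 1)` attains its strict minimum at `k = 2`: strict
partial replication with factor `2` yields a strictly larger stability region
than no replication and than any other replication factor. -/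
theorem pareto_partial_replication_best
    {Ω : Type*} [MeasurableSpace Ω] (P : Measure Ω) [IsProbabilityMeasure P]
    (α : ℝ) (hα : 0 < α)
    (x : ℕ → Ω → ℝ)
    (hxmeas : ∀ i, Measurable (x i))
    (hxone : ∀ i ω, 1 ≤ x i ω)
    (hxlaw : ∀ i, ∀ s : ℝ, 1 ≤ s →
      P {ω | s ≤ x i ω} = ENNReal.ofReal (s ^ (-α)))
    (hxindep : iIndepFun x P) :
    (∀ k : ℕ, 1 ≤ k → 1 < (k : ℝ) * α →
        (k : ℝ) * ∫ ω, (⨅ j : Fin k, x (j : ℕ) ω) ∂P =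
            (k : ℝ) + (k : ℝ) / ((k : ℝ) * α - 1) ∧
          (k : ℝ) * ∫ ω, (⨅ j : Fin k, x (j : ℕ) ω) ∂P =
            (k : ℝ) ^ 2 * α / ((k : ℝ) * α - 1)) ∧
      (∃ α₀ : ℝ, 1 < α₀ ∧ ∀ β : ℝ, 1 < β → β < α₀ →
        ∀ k : ℕ, 1 ≤ k → k ≠ 2 →
          4 * β / (2 * β - 1) < (k : ℝ) ^ 2 * β / ((k : ℝ) * β - 1)) := by
  constructor
  · intro k hk hkα
    haveI : Nonempty (Fin k) := ⟨⟨0, hk⟩⟩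
    have hkpos : (0:ℝ) < k := by exact_mod_cast hk
    set Y : Ω → ℝ := fun ω => ⨅ j : Fin k, x (j : ℕ) ω with hYdef
    have hYmeas : Measurable Y := Measurable.iInf fun j => hxmeas j
    have hYone : ∀ ω, 1 ≤ Y ω := fun ω => le_ciInf fun j => hxone j ω
    have hYnn : ∀ ω, 0 ≤ Y ω := fun ω => le_trans zero_le_one (hYone ω)
    -- survival function of Y
    have hsurv : ∀ s : ℝ, 1 ≤ s →
        P {ω | s ≤ Y ω} = ENNReal.ofReal (s ^ (-((k:ℝ) * α))) := by
      intro s hs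
      have hspos : 0 < s := lt_of_lt_of_le one_pos hs
      have hset : {ω | s ≤ Y ω} = ⋂ i ∈ Finset.range k, {ω | s ≤ x i ω} := by
        ext ω
        simp only [Set.mem_setOf_eq, Set.mem_iInter, hYdef, Finset.mem_range]
        constructor
        · intro h i hi
          exact le_trans h (ciInf_le (f := fun j : Fin k => x (j : ℕ) ω) ⟨1, by rintro y ⟨j, rfl⟩; exact hxone _ ω⟩ ⟨i, hi⟩)
        · intro h
          exact le_ciInf fun j => h j j.2
      rw [hset, hxindep.meas_biInter (fun i _ =>
        ⟨Ici s, measurableSet_Ici, by ext ω; simp [Set.mem_preimage]⟩)]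
      have : ∀ i ∈ Finset.range k, P {ω | s ≤ x i ω} = ENNReal.ofReal (s ^ (-α)) :=
        fun i _ => hxlaw i s hs
      rw [Finset.prod_congr rfl this, Finset.prod_const, Finset.card_range,
        ← ENNReal.ofReal_pow (rpow_nonneg hspos.le _), ← rpow_natCast _ k,
        ← rpow_mul hspos.le]
      ring_nf
    -- Bochner integral via layer cake
    have hint : ∫ ω, Y ω ∂P = 1 + 1 / ((k:ℝ) * α - 1) := by
      rw [integral_eq_lintegral_of_nonneg_ae (Filter.Eventually.of_forall hYnn)
        hYmeas.aestronglyMeasurable]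
      rw [lintegral_eq_lintegral_meas_le P (Filter.Eventually.of_forall hYnn)
        hYmeas.aemeasurable]
      have hsplit : (Ioi (0:ℝ)) = Ioc 0 1 ∪ Ioi 1 := (Set.Ioc_union_Ioi_eq_Ioi zero_le_one).symm
      rw [hsplit, lintegral_union measurableSet_Ioi (Set.Ioc_disjoint_Ioi le_rfl)]
      have h1 : ∫⁻ t in Ioc (0:ℝ) 1, P {a | t ≤ Y a} = 1 := by
        have hpt : ∀ t ∈ Ioc (0:ℝ) 1, P {a | t ≤ Y a} = (1 : ENNReal) := by
          intro t ht
          have : {a | t ≤ Y a} = Set.univ := by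
            ext ω; simp only [Set.mem_setOf_eq, Set.mem_univ, iff_true]
            exact le_trans ht.2 (hYone ω)
          rw [this, measure_univ]
        rw [setLIntegral_congr_fun measurableSet_Ioc hpt,
          setLIntegral_one, Real.volume_Ioc]
        norm_num
      have h2 : ∫⁻ t in Ioi (1:ℝ), P {a | t ≤ Y a} =
          ENNReal.ofReal (1 / ((k:ℝ) * α - 1)) := by
        have hcong : ∫⁻ t in Ioi (1:ℝ), P {a | t ≤ Y a} =
            ∫⁻ t in Ioi (1:ℝ), ENNReal.ofReal (t ^ (-((k:ℝ) * α))) := by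
          apply setLIntegral_congr_fun measurableSet_Ioi
          exact fun t ht => hsurv t (le_of_lt ht)
        rw [hcong]
        have hlt : -((k:ℝ) * α) < -1 := by linarith
        have hInt : IntegrableOn (fun t : ℝ => t ^ (-((k:ℝ)*α))) (Ioi 1) :=
          integrableOn_Ioi_rpow_of_lt hlt one_pos
        rw [← ofReal_integral_eq_lintegral_ofReal hInt
          (Filter.eventually_of_mem (self_mem_ae_restrict measurableSet_Ioi)
            (fun t ht => rpow_nonneg (zero_le_one.trans (le_of_lt ht)) _))]
        congr 1
        rw [integral_Ioi_rpow_of_lt hlt one_pos, Real.one_rpow]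
        have hd1 : -((k:ℝ) * α) + 1 ≠ 0 := by linarith
        have hd2 : (k:ℝ) * α - 1 ≠ 0 := by linarith
        field_simp
        ring
      rw [h1, h2, ENNReal.toReal_add (by simp) ENNReal.ofReal_ne_top]
      rw [ENNReal.toReal_one, ENNReal.toReal_ofReal (le_of_lt (div_pos one_pos (by linarith)))]
    constructor
    · rw [hint]; ring
    · rw [hint]
      have hne : (k:ℝ) * α - 1 ≠ 0 := by linarith
      field_simp
      ring
  · refine ⟨3/2, by norm_num, fun β hβ hβ' k hk hk2 => ?_⟩
    have hkpos : (0:ℝ) < k := by exact_mod_cast hk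
    have h2β : (0:ℝ) < 2 * β - 1 := by linarith
    have hk1 : (1:ℝ) ≤ k := by exact_mod_cast hk
    have hkβ : (0:ℝ) < (k:ℝ) * β - 1 := by nlinarith
    rw [div_lt_div_iff₀ h2β hkβ]
    rcases Nat.lt_or_ge k 2 with hlt | hge
    · interval_cases k
      · push_cast
        nlinarith [mul_pos (by linarith : (0:ℝ) < β) (by linarith : (0:ℝ) < 3 - 2*β)]
    · have h3 : 3 ≤ k := by omega
      have h3' : (3:ℝ) ≤ k := by exact_mod_cast h3
      nlinarith [mul_pos hkpos (sub_pos.mpr hβ), sq_nonneg ((k:ℝ) - 2),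
        mul_pos (mul_pos hkpos hkpos) (sub_pos.mpr hβ)]
end

section
/- Let α > 1, let x_1, …, x_k be i.i.d. Pareto random variables with complementary CDF P(x_1 ≥ x) = x^{−α} for x ≥ 1, and let y ≥ 0 be an integrable nonnegative random variable (independent of the x_j). Then for every integer k ≥ 1 with kα > 1: k·E[min{y + x_1, …, y + x_k}] = k·( E[y] + kα/(kα − 1) ). Moreover, if E[y] is sufficiently large (e.g., E[y] ≥ α/(α − 1)), then for every k ≥ 2: E[y] + α/(α − 1) < k·( E[y] + kα/(kα − 1) ); i.e., under this additive correlation of replica service times, No-Replication (k = 1) minimizes k·E[min] and the non-monotonic behavior in k disappears. -/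
open MeasureTheory ProbabilityTheory Real

/-- Layer-cake computation: if `f ≥ 1` has survival function `s ^ (-β)` on `[1,∞)`
with `β > 1`, then `f` is integrable with mean `β / (β - 1)`. -/
lemma pareto_tail_integral {Ω : Type*} [MeasurableSpace Ω] (P : Measure Ω)
    [IsProbabilityMeasure P] (f : Ω → ℝ) (hf : Measurable f) (h1 : ∀ ω, 1 ≤ f ω)
    (β : ℝ) (hβ : 1 < β)
    (hlaw : ∀ s : ℝ, 1 ≤ s → P {ω | s ≤ f ω} = ENNReal.ofReal (s ^ (-β))) :
    Integrable f P ∧ ∫ ω, f ω ∂P = β / (β - 1) := by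
  have hβ0 : β - 1 ≠ 0 := by linarith
  have hfnn : ∀ ω, 0 ≤ f ω := fun ω => le_trans zero_le_one (h1 ω)
  have key : ∫⁻ ω, ENNReal.ofReal (f ω) ∂P = ∫⁻ t in Set.Ioi (0:ℝ), P {a | t ≤ f a} :=
    lintegral_eq_lintegral_meas_le P (Filter.Eventually.of_forall hfnn) hf.aemeasurable
  have hsplit : Set.Ioi (0:ℝ) = Set.Ioc (0:ℝ) 1 ∪ Set.Ioi (1:ℝ) :=
    (Set.Ioc_union_Ioi_eq_Ioi zero_le_one).symm
  have hdisj : Disjoint (Set.Ioc (0:ℝ) 1) (Set.Ioi (1:ℝ)) := Set.Ioc_disjoint_Ioi le_rfl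
  have h_on_Ioc : ∫⁻ t in Set.Ioc (0:ℝ) 1, P {a | t ≤ f a} = 1 := by
    rw [setLIntegral_congr_fun measurableSet_Ioc
      (fun t ht => ?_) (g := fun _ => (1 : ENNReal))]
    · simp
    · have : {a | t ≤ f a} = Set.univ := by
        ext ω; simp only [Set.mem_setOf_eq, Set.mem_univ, iff_true]
        exact le_trans ht.2 (h1 ω)
      rw [this, measure_univ]
  have h_on_Ioi : ∫⁻ t in Set.Ioi (1:ℝ), P {a | t ≤ f a}
      = ENNReal.ofReal (1 / (β - 1)) := by
    rw [setLIntegral_congr_fun measurableSet_Ioi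
      (fun t ht => hlaw t (le_of_lt ht))
      (g := fun t => ENNReal.ofReal (t ^ (-β)))]
    rw [← ofReal_integral_eq_lintegral_ofReal]
    · rw [integral_Ioi_rpow_of_lt (by linarith) one_pos, Real.one_rpow]
      have h2 : -β + 1 ≠ 0 := by intro h; apply hβ0; linarith
      congr 1
      field_simp
      ring
    · exact integrableOn_Ioi_rpow_of_lt (by linarith) one_pos
    · filter_upwards [ae_restrict_mem measurableSet_Ioi] with t ht
      exact Real.rpow_nonneg (le_of_lt (lt_trans one_pos ht)) _
  have htotal : ∫⁻ ω, ENNReal.ofReal (f ω) ∂P = 1 + ENNReal.ofReal (1 / (β - 1)) := by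
    rw [key, hsplit, lintegral_union measurableSet_Ioi hdisj, h_on_Ioc, h_on_Ioi]
  have hfin : ∫⁻ ω, ENNReal.ofReal (f ω) ∂P < ⊤ := by
    rw [htotal]; exact ENNReal.add_lt_top.mpr ⟨ENNReal.one_lt_top, ENNReal.ofReal_lt_top⟩
  have hint : Integrable f P := by
    refine ⟨hf.aestronglyMeasurable, ?_⟩
    rw [hasFiniteIntegral_iff_norm]
    have heq : ∫⁻ a, ENNReal.ofReal ‖f a‖ ∂P = ∫⁻ a, ENNReal.ofReal (f a) ∂P :=
      lintegral_congr fun a => by rw [Real.norm_eq_abs, abs_of_nonneg (hfnn a)]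
    rw [heq]; exact hfin
  refine ⟨hint, ?_⟩
  rw [integral_eq_lintegral_of_nonneg_ae (Filter.Eventually.of_forall hfnn)
    hf.aestronglyMeasurable, htotal]
  rw [ENNReal.toReal_add ENNReal.one_ne_top ENNReal.ofReal_ne_top]
  rw [ENNReal.toReal_one, ENNReal.toReal_ofReal (le_of_lt (div_pos one_pos (by linarith)))]
  field_simp
  ring

/-- **Correlated Pareto replicas: No-Replication is best.**
Let `x 0, x 1, …` be i.i.d. Pareto random variables with survival function
`P(x i ≥ s) = s^(−α)` for `s ≥ 1` (shape `α > 1`), and let `y ≥ 0` be an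
integrable random variable independent of the `x i` (the common additive
component of the correlated replica service times `y + x j`).  Then for every
`k ≥ 1` with `k * α > 1`:
`k * E[min {y + x 0, …, y + x (k−1)}] = k * (E[y] + k*α/(k*α − 1))`.
Moreover, if `E[y] ≥ α/(α−1)`, then for every `k ≥ 2`
`E[y] + α/(α−1) < k * (E[y] + k*α/(k*α − 1))`: No-Replication (`k = 1`)
minimizes `k * E[min]`, so the non-monotonic behavior in `k` disappears. -/
theorem correlated_pareto_no_replication_best
    {Ω : Type*} [MeasurableSpace Ω] (P : Measure Ω) [IsProbabilityMeasure P]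
    (α : ℝ) (hα : 1 < α)
    (x : ℕ → Ω → ℝ) (y : Ω → ℝ)
    (hxmeas : ∀ i, Measurable (x i)) (hymeas : Measurable y)
    (hxone : ∀ i ω, 1 ≤ x i ω)
    (hynn : ∀ ω, 0 ≤ y ω) (hyint : Integrable y P)
    (hxlaw : ∀ i, ∀ s : ℝ, 1 ≤ s →
      P {ω | s ≤ x i ω} = ENNReal.ofReal (s ^ (-α)))
    (hxindep : iIndepFun x P)
    (hyx : IndepFun y (fun ω => fun i : ℕ => x i ω) P) :
    (∀ k : ℕ, 1 ≤ k → 1 < (k : ℝ) * α →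
        (k : ℝ) * ∫ ω, (⨅ j : Fin k, (y ω + x (j : ℕ) ω)) ∂P =
          (k : ℝ) * ((∫ ω, y ω ∂P) + (k : ℝ) * α / ((k : ℝ) * α - 1))) ∧
      (α / (α - 1) ≤ ∫ ω, y ω ∂P → ∀ k : ℕ, 2 ≤ k →
        (∫ ω, y ω ∂P) + α / (α - 1) <
          (k : ℝ) * ((∫ ω, y ω ∂P) + (k : ℝ) * α / ((k : ℝ) * α - 1))) := by
  constructor
  · intro k hk1 hkα
    haveI : Nonempty (Fin k) := Fin.pos_iff_nonempty.mp (by omega)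
    set m : Ω → ℝ := fun ω => ⨅ j : Fin k, x (j : ℕ) ω with hm_def
    have hmmeas : Measurable m := Measurable.iInf (fun j => hxmeas j)
    have hm1 : ∀ ω, 1 ≤ m ω := fun ω => le_ciInf fun j => hxone j ω
    have hbdd : ∀ ω, BddBelow (Set.range (fun j : Fin k => x (j : ℕ) ω)) :=
      fun ω => (Set.finite_range _).bddBelow
    have hmlaw : ∀ s : ℝ, 1 ≤ s →
        P {ω | s ≤ m ω} = ENNReal.ofReal (s ^ (-((k : ℝ) * α))) := by
      intro s hs
      have hs0 : (0:ℝ) < s := lt_of_lt_of_le one_pos hs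
      have hset : {ω | s ≤ m ω} = ⋂ i ∈ Finset.range k, x i ⁻¹' Set.Ici s := by
        ext ω
        simp only [Set.mem_setOf_eq, Set.mem_iInter, hm_def, le_ciInf_iff (hbdd ω),
          Finset.mem_range, Set.mem_preimage, Set.mem_Ici]
        constructor
        · intro h i hi; exact h ⟨i, hi⟩
        · intro h j; exact h j j.isLt
      rw [hset, hxindep.meas_biInter (fun i _ => ⟨Set.Ici s, measurableSet_Ici, rfl⟩)]
      have : ∀ i ∈ Finset.range k, P (x i ⁻¹' Set.Ici s) = ENNReal.ofReal (s ^ (-α)) :=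
        fun i _ => hxlaw i s hs
      rw [Finset.prod_congr rfl this, Finset.prod_const, Finset.card_range,
        ← ENNReal.ofReal_pow (Real.rpow_nonneg hs0.le _),
        ← Real.rpow_natCast (s ^ (-α)) k, ← Real.rpow_mul hs0.le]
      ring_nf
    obtain ⟨hmint, hmval⟩ := pareto_tail_integral P m hmmeas hm1 ((k : ℝ) * α) hkα hmlaw
    have hpt : ∀ ω, (⨅ j : Fin k, (y ω + x (j : ℕ) ω)) = y ω + m ω := by
      intro ω
      obtain ⟨i, hi⟩ := exists_eq_ciInf_of_finite (f := fun j : Fin k => x (j : ℕ) ω)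
      apply le_antisymm
      · calc (⨅ j : Fin k, (y ω + x (j : ℕ) ω)) ≤ y ω + x (i : ℕ) ω :=
              ciInf_le ((Set.finite_range _).bddBelow) i
          _ = y ω + m ω := by rw [hm_def]; simp only [← hi]
      · exact le_ciInf fun j => add_le_add_right (ciInf_le (hbdd ω) j) _
    have : ∫ ω, (⨅ j : Fin k, (y ω + x (j : ℕ) ω)) ∂P = ∫ ω, (y ω + m ω) ∂P :=
      integral_congr_ae (Filter.Eventually.of_forall hpt)
    rw [this, integral_add hyint hmint, hmval]
  · intro hEy k hk2
    have hk2' : (2:ℝ) ≤ (k:ℝ) := by exact_mod_cast hk2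
    have hα1 : (0:ℝ) < α - 1 := by linarith
    have hq1 : (0:ℝ) < (k:ℝ) * α - 1 := by nlinarith
    have hq0 : (0:ℝ) < (k:ℝ) * α / ((k:ℝ) * α - 1) := by positivity
    have hEy0 : (0:ℝ) < α / (α - 1) := by positivity
    nlinarith [mul_le_mul_of_nonneg_right hk2'
      (le_of_lt (add_pos (lt_of_lt_of_le hEy0 hEy) hq0))]
end

section
/- Let x and y be independent exponential random variables with rate μ > 0, and let Δ ≥ 0. Then: (i) E[min{x, Δ + y}] = 1/μ − e^{−μΔ}/(2μ); (ii) E[min{(x − Δ)⁺, y}·1_{x > Δ}] = e^{−μΔ}/(2μ); and hence (iii) for any arrival rate λ > 0, the total resource usage u = λ·E[min{x, Δ+y}] + λ·E[min{(x−Δ)⁺, y}·1_{x>Δ}] equals λ/μ, independently of the replication offset Δ. -/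
open MeasureTheory ProbabilityTheory Real

section DeferredRepHelpers

open Set Filter Topology
open scoped ENNReal

namespace DeferredRep

lemma hasDerivAt_aux {b : ℝ} (hb : b ≠ 0) (x : ℝ) :
    HasDerivAt (fun t => -exp (-(b * t)) / b) (exp (-(b * x))) x := by
  have h1 : HasDerivAt (fun t : ℝ => -(b * t)) (-b) x := by
    simpa [Pi.neg_def] using ((hasDerivAt_id x).const_mul b).neg
  have h2 : HasDerivAt (fun t => -exp (-(b * t)) / b) (-(exp (-(b * x)) * -b) / b) x :=
    h1.exp.neg.div_const b
  convert h2 using 1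
  field_simp

lemma integral_exp_neg_mul_Ioi {b : ℝ} (hb : 0 < b) (a : ℝ) :
    ∫ t in Ioi a, exp (-(b * t)) = exp (-(b * a)) / b := by
  have hint : IntegrableOn (fun t => exp (-(b * t))) (Ioi a) := by
    simpa [neg_mul] using exp_neg_integrableOn_Ioi a hb
  have htend : Tendsto (fun t => -exp (-(b * t)) / b) atTop (𝓝 0) := by
    have h := (tendsto_exp_atBot.comp
      ((tendsto_id (α := ℝ)).const_mul_atTop_of_neg (neg_neg_iff_pos.2 hb))).neg.div_const b
    simpa [neg_mul, Function.comp] using h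
  have := integral_Ioi_of_hasDerivAt_of_tendsto'
    (fun x _ => hasDerivAt_aux hb.ne' x) hint htend
  rw [this]; ring

lemma expMeasure_Iic {μ : ℝ} (hμ : 0 < μ) (s : ℝ) :
    expMeasure μ (Iic s) = ENNReal.ofReal (if 0 ≤ s then 1 - exp (-(μ * s)) else 0) := by
  haveI := isProbabilityMeasure_expMeasure hμ
  have h1 : ((expMeasure μ) (Iic s)).toReal = if 0 ≤ s then 1 - exp (-(μ * s)) else 0 := by
    rw [← measureReal_def, ← cdf_eq_real]
    exact cdf_expMeasure_eq hμ s
  rw [← h1, ENNReal.ofReal_toReal (measure_ne_top _ _)]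

lemma expMeasure_Ioi {μ : ℝ} (hμ : 0 < μ) (s : ℝ) :
    expMeasure μ (Ioi s) = ENNReal.ofReal (exp (-(μ * max s 0))) := by
  haveI := isProbabilityMeasure_expMeasure hμ
  have hc : expMeasure μ (Ioi s) = 1 - expMeasure μ (Iic s) := by
    rw [← compl_Iic, measure_compl measurableSet_Iic (measure_ne_top _ _), measure_univ]
  rw [hc, expMeasure_Iic hμ]
  rcases le_or_gt 0 s with h | h
  · rw [if_pos h, max_eq_left h]
    have he : exp (-(μ * s)) ≤ 1 := exp_le_one_iff.2 (by nlinarith)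
    rw [show (1 : ℝ≥0∞) = ENNReal.ofReal 1 by simp,
      ← ENNReal.ofReal_sub 1 (by linarith)]
    norm_num
  · rw [if_neg (not_le.2 h), max_eq_right h.le]
    simp

lemma integral_eq_of_meas_lt {Ω : Type*} [MeasurableSpace Ω] (P : Measure Ω)
    [IsProbabilityMeasure P]
    {f : Ω → ℝ} (hf : AEMeasurable f P) (hnn : 0 ≤ᵐ[P] f)
    {g : ℝ → ℝ} (hg : IntegrableOn g (Ioi 0)) (hgnn : ∀ t ∈ Ioi (0 : ℝ), 0 ≤ g t)
    (h : ∀ t ∈ Ioi (0 : ℝ), P {a | t < f a} = ENNReal.ofReal (g t)) :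
    ∫ ω, f ω ∂P = ∫ t in Ioi 0, g t := by
  rw [integral_eq_lintegral_of_nonneg_ae hnn hf.aestronglyMeasurable,
    lintegral_eq_lintegral_meas_lt P hnn hf,
    setLIntegral_congr_fun_ae measurableSet_Ioi (ae_of_all _ h),
    ← ofReal_integral_eq_lintegral_ofReal hg
      ((ae_restrict_iff' measurableSet_Ioi).2 (ae_of_all _ hgnn)),
    ENNReal.toReal_ofReal (setIntegral_nonneg measurableSet_Ioi hgnn)]

end DeferredRep

end DeferredRepHelpers

/-- **Resource usage under independent replication with a deferred replica.**
Let `x`, `y` be independent exponential(μ) service times of an original job and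
of its replica, the replica being started only if the original is still running
after the replication offset `Δ ≥ 0` (and whichever copy finishes first purges
the other).  Then the expected busy times of the two servers are
(i) `E[min {x, Δ + y}] = 1/μ − e^{−μΔ}/(2μ)` and
(ii) `E[min {x − Δ, y} · 1_{x > Δ}] = e^{−μΔ}/(2μ)`;
hence (iii) for any arrival rate `λ > 0` the total resource usage
`u = ρ₁ + ρ₂` equals `λ/μ`, independently of `Δ`. -/
theorem deferred_replication_resource_usage_indep
    {Ω : Type*} [MeasurableSpace Ω] (P : Measure Ω) [IsProbabilityMeasure P]
    (μ : ℝ) (hμ : 0 < μ) (Δ : ℝ) (hΔ : 0 ≤ Δ) (lam : ℝ) (hlam : 0 < lam)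
    (x y : Ω → ℝ) (hxmeas : Measurable x) (hymeas : Measurable y)
    (hxlaw : Measure.map x P = expMeasure μ)
    (hylaw : Measure.map y P = expMeasure μ)
    (hindep : IndepFun x y P) :
    (∫ ω, min (x ω) (Δ + y ω) ∂P = 1 / μ - exp (-(μ * Δ)) / (2 * μ)) ∧
      (∫ ω, (if Δ < x ω then min (x ω - Δ) (y ω) else 0) ∂P =
        exp (-(μ * Δ)) / (2 * μ)) ∧
      lam * (∫ ω, min (x ω) (Δ + y ω) ∂P) +
          lam * (∫ ω, (if Δ < x ω then min (x ω - Δ) (y ω) else 0) ∂P) =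
        lam / μ := by
  classical
  open Set DeferredRep in
  haveI := isProbabilityMeasure_expMeasure hμ
  -- almost-sure nonnegativity
  have hIic0 : expMeasure μ (Set.Iic 0) = 0 := by
    rw [expMeasure_Iic hμ]; simp
  have hx0 : ∀ᵐ ω ∂P, 0 ≤ x ω := by
    rw [ae_iff]
    have : {ω | ¬ 0 ≤ x ω} = x ⁻¹' Set.Iio 0 := by ext ω; simp
    rw [this, ← Measure.map_apply hxmeas measurableSet_Iio, hxlaw]
    exact measure_mono_null Set.Iio_subset_Iic_self hIic0
  have hy0 : ∀ᵐ ω ∂P, 0 ≤ y ω := by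
    rw [ae_iff]
    have : {ω | ¬ 0 ≤ y ω} = y ⁻¹' Set.Iio 0 := by ext ω; simp
    rw [this, ← Measure.map_apply hymeas measurableSet_Iio, hylaw]
    exact measure_mono_null Set.Iio_subset_Iic_self hIic0
  -- tails of preimages
  have hxt : ∀ s : ℝ, P (x ⁻¹' Set.Ioi s) = ENNReal.ofReal (exp (-(μ * max s 0))) := by
    intro s
    rw [← Measure.map_apply hxmeas measurableSet_Ioi, hxlaw, expMeasure_Ioi hμ]
  have hyt : ∀ s : ℝ, P (y ⁻¹' Set.Ioi s) = ENNReal.ofReal (exp (-(μ * max s 0))) := by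
    intro s
    rw [← Measure.map_apply hymeas measurableSet_Ioi, hylaw, expMeasure_Ioi hμ]
  have hmul : ∀ a b : ℝ, P (x ⁻¹' Set.Ioi a ∩ y ⁻¹' Set.Ioi b)
      = P (x ⁻¹' Set.Ioi a) * P (y ⁻¹' Set.Ioi b) := fun a b =>
    hindep.measure_inter_preimage_eq_mul _ _ measurableSet_Ioi measurableSet_Ioi
  -- the two tail density functions
  set g₁ : ℝ → ℝ := fun t => exp (-(μ * t)) * exp (-(μ * max (t - Δ) 0)) with hg₁def
  set g₂ : ℝ → ℝ := fun t => exp (-(μ * (Δ + t))) * exp (-(μ * t)) with hg₂def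
  have hg₂eq : g₂ = fun t => exp (-(μ * Δ)) * exp (-(2 * μ * t)) := by
    funext t; rw [hg₂def]; simp only [← Real.exp_add]; ring_nf
  -- integrability
  have hmaj : IntegrableOn (fun t => exp (-(μ * t))) (Set.Ioi (0:ℝ)) := by
    simpa [neg_mul] using exp_neg_integrableOn_Ioi 0 hμ
  have hg₁cont : Continuous g₁ := by
    apply Continuous.mul
    · exact ((continuous_const.mul continuous_id).neg).rexp
    · exact ((continuous_const.mul ((continuous_id.sub continuous_const).max
        continuous_const)).neg).rexp
  have hg₁int : IntegrableOn g₁ (Set.Ioi (0:ℝ)) := by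
    refine hmaj.mono' hg₁cont.aestronglyMeasurable.restrict (ae_of_all _ fun t => ?_)
    rw [hg₁def]
    have h2 : exp (-(μ * max (t - Δ) 0)) ≤ 1 :=
      exp_le_one_iff.2 (by positivity |> neg_nonpos_of_nonneg)
    rw [Real.norm_eq_abs, abs_of_nonneg (by positivity)]
    calc exp (-(μ * t)) * exp (-(μ * max (t - Δ) 0)) ≤ exp (-(μ * t)) * 1 := by
          exact mul_le_mul_of_nonneg_left h2 (exp_nonneg _)
      _ = exp (-(μ * t)) := mul_one _
  have hexpint : IntegrableOn (fun t : ℝ => exp (-(2 * μ * t))) (Set.Ioi (0:ℝ)) := by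
    have h2μ : (0:ℝ) < 2 * μ := by positivity
    simpa [neg_mul] using exp_neg_integrableOn_Ioi (0:ℝ) h2μ
  have hg₂int : IntegrableOn g₂ (Set.Ioi (0:ℝ)) := by
    rw [hg₂eq]
    exact hexpint.const_mul _
  -- first expectation
  have E1 : ∫ ω, min (x ω) (Δ + y ω) ∂P = ∫ t in Set.Ioi (0:ℝ), g₁ t := by
    refine integral_eq_of_meas_lt P
      ((hxmeas.min (measurable_const.add hymeas) :
        Measurable fun ω => min (x ω) (Δ + y ω)).aemeasurable) ?_ hg₁int
      (fun t _ => by positivity) ?_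
    · filter_upwards [hx0, hy0] with ω h1 h2
      simp only [Pi.zero_apply]
      exact le_min h1 (by linarith)
    · intro t ht
      have hset : {a | t < min (x a) (Δ + y a)}
          = x ⁻¹' Set.Ioi t ∩ y ⁻¹' Set.Ioi (t - Δ) := by
        ext ω
        simp only [Set.mem_setOf_eq, lt_min_iff, Set.mem_inter_iff, Set.mem_preimage,
          Set.mem_Ioi, sub_lt_iff_lt_add']
      rw [hset, hmul, hxt, hyt, ← ENNReal.ofReal_mul (exp_nonneg _), hg₁def]
      rw [max_eq_left (le_of_lt ht)]
  -- second expectation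
  have E2 : ∫ ω, (if Δ < x ω then min (x ω - Δ) (y ω) else 0) ∂P
      = ∫ t in Set.Ioi (0:ℝ), g₂ t := by
    refine integral_eq_of_meas_lt P ?_ ?_ hg₂int (fun t _ => by positivity) ?_
    · exact (Measurable.ite (measurableSet_lt measurable_const hxmeas)
        ((hxmeas.sub measurable_const).min hymeas) measurable_const).aemeasurable
    · filter_upwards [hy0] with ω h2
      simp only [Pi.zero_apply]
      split_ifs with h
      · exact le_min (by linarith) h2
      · exact le_refl 0
    · intro t ht
      have ht' : (0:ℝ) < t := ht
      have hset : {a | t < (if Δ < x a then min (x a - Δ) (y a) else 0)}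
          = x ⁻¹' Set.Ioi (Δ + t) ∩ y ⁻¹' Set.Ioi t := by
        ext ω
        simp only [Set.mem_setOf_eq, Set.mem_inter_iff, Set.mem_preimage, Set.mem_Ioi]
        split_ifs with h
        · rw [lt_min_iff, lt_sub_iff_add_lt']
        · constructor
          · intro hcontra; exact absurd (ht'.trans hcontra) (lt_irrefl 0)
          · rintro ⟨h1, _⟩; exact absurd (by linarith : Δ < x ω) h
      rw [hset, hmul, hxt, hyt, ← ENNReal.ofReal_mul (exp_nonneg _), hg₂def]
      rw [max_eq_left (by linarith), max_eq_left ht'.le]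
  -- value of the first integral
  have I1 : ∫ t in Set.Ioi (0:ℝ), g₁ t = 1 / μ - exp (-(μ * Δ)) / (2 * μ) := by
    have hsplit : ∫ t in Set.Ioi (0:ℝ), g₁ t
        = (∫ t in Set.Ioc (0:ℝ) Δ, g₁ t) + ∫ t in Set.Ioi Δ, g₁ t := by
      rw [← Set.Ioc_union_Ioi_eq_Ioi hΔ] at hg₁int ⊢
      exact setIntegral_union (Set.Ioc_disjoint_Ioi le_rfl) measurableSet_Ioi
        (hg₁int.mono_set Set.subset_union_left)
        (hg₁int.mono_set Set.subset_union_right)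
    have hA : ∫ t in Set.Ioc (0:ℝ) Δ, g₁ t = (1 - exp (-(μ * Δ))) / μ := by
      rw [setIntegral_congr_fun measurableSet_Ioc
        (fun t ht => by
          rw [hg₁def]
          simp only
          rw [max_eq_right (by linarith [ht.2] : t - Δ ≤ 0), mul_zero, neg_zero,
            Real.exp_zero, mul_one] : Set.EqOn g₁ (fun t => exp (-(μ * t))) (Set.Ioc 0 Δ)),
        ← intervalIntegral.integral_of_le hΔ]
      rw [intervalIntegral.integral_eq_sub_of_hasDerivAt
        (fun t _ => hasDerivAt_aux hμ.ne' t)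
        (((continuous_const.mul continuous_id).neg.rexp).intervalIntegrable 0 Δ)]
      simp only [mul_zero, neg_zero, Real.exp_zero]
      ring
    have hB : ∫ t in Set.Ioi Δ, g₁ t = exp (-(μ * Δ)) / (2 * μ) := by
      have heq : Set.EqOn g₁ (fun t => exp (μ * Δ) * exp (-(2 * μ * t))) (Set.Ioi Δ) := by
        intro t ht
        rw [hg₁def]
        simp only
        rw [max_eq_left (by linarith [Set.mem_Ioi.1 ht] : (0:ℝ) ≤ t - Δ),
          ← Real.exp_add, ← Real.exp_add]
        ring_nf
      rw [setIntegral_congr_fun measurableSet_Ioi heq, integral_const_mul,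
        integral_exp_neg_mul_Ioi (by positivity : (0:ℝ) < 2 * μ), ← mul_div_assoc,
        ← Real.exp_add, show μ * Δ + -(2 * μ * Δ) = -(μ * Δ) by ring]
    rw [hsplit, hA, hB]
    field_simp
    ring
  -- value of the second integral
  have I2 : ∫ t in Set.Ioi (0:ℝ), g₂ t = exp (-(μ * Δ)) / (2 * μ) := by
    rw [hg₂eq, integral_const_mul, integral_exp_neg_mul_Ioi (by positivity : (0:ℝ) < 2 * μ)]
    rw [mul_zero, neg_zero, Real.exp_zero]
    ring
  refine ⟨E1.trans I1, E2.trans I2, ?_⟩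
  rw [E1.trans I1, E2.trans I2]
  field_simp
  ring
end

section
/- Let x, y, z be i.i.d. exponential random variables with rate μ > 0, let δ ∈ (0,1) with δ ≠ 1/2, let Δ ≥ 0, and set the correlated original and replica service times X₁ := (1−δ)x + δz and X₂ := (1−δ)y + δz. Then: (i) E[min{X₁, Δ + X₂}] = (1/μ)·( 1 − ((1−δ)/2)·e^{−μΔ/(1−δ)} ); (ii) E[min{X₁ − Δ, X₂}·1_{X₁ > Δ}] = (1/μ)·( (δ²/(2δ−1))·e^{−μΔ/δ} − ((1−δ)/(2(2δ−1)))·e^{−μΔ/(1−δ)} ); and hence (iii) for any arrival rate λ > 0, the resource usage u = λ·E[min{X₁, Δ+X₂}] + λ·E[min{X₁−Δ, X₂}·1_{X₁>Δ}] equals (λ/μ)·( 1 + (δ²/(2δ−1))·e^{−μΔ/δ} − (δ(1−δ)/(2δ−1))·e^{−μΔ/(1−δ)} ). -/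
open MeasureTheory ProbabilityTheory Real Set Filter Topology
open scoped ENNReal NNReal


lemma tendsto_neg_exp (hr : 0 < (r:ℝ)) : Tendsto (fun a : ℝ => -exp (-(r*a))) atTop (𝓝 0) := by
  have h1 : Tendsto (fun a : ℝ => r * a) atTop atTop :=
    Tendsto.const_mul_atTop hr tendsto_id
  have := (tendsto_exp_neg_atTop_nhds_zero.comp h1).neg
  simpa using this

lemma V1 (hr : 0 < (r:ℝ)) (c : ℝ) : ∫ t in Ioi c, r * exp (-(r*t)) = exp (-(r*c)) := by
  have := integral_Ioi_of_hasDerivAt_of_nonneg' (a := c)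
    (g := fun a => -exp (-(r*a))) (g' := fun t => r * exp (-(r*t)))
    (fun t _ => hasDerivAt_neg_exp_mul_exp)
    (fun t _ => by positivity) (tendsto_neg_exp hr)
  simpa using this

lemma I1 (hr : 0 < (r:ℝ)) (c : ℝ) : IntegrableOn (fun t => r * exp (-(r*t))) (Ioi c) := by
  have := integrableOn_Ioi_deriv_of_nonneg' (a := c)
    (g := fun a => -exp (-(r*a))) (g' := fun t => r * exp (-(r*t)))
    (fun t _ => hasDerivAt_neg_exp_mul_exp)
    (fun t _ => by positivity) (tendsto_neg_exp hr)
  exact this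

lemma V2deriv (hr : 0 < (r:ℝ)) (c t : ℝ) :
    HasDerivAt (fun a : ℝ => -((a - c + 1/r) * exp (-(r*a)))) ((t - c) * (r * exp (-(r*t)))) t := by
  have h1 : HasDerivAt (fun a : ℝ => a - c + 1/r) 1 t := by
    simpa using ((hasDerivAt_id t).sub_const c).add_const (1/r)
  have h2 : HasDerivAt (fun a : ℝ => exp (-(r*a))) (-r * exp (-(r*t))) t := by
    have := hasDerivAt_neg_exp_mul_exp (r := r) (x := t)
    simpa [neg_mul, Pi.neg_def] using this.neg
  have := (h1.mul h2).neg
  refine this.congr_deriv ?_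
  field_simp
  ring

lemma V2tendsto (hr : 0 < (r:ℝ)) (c : ℝ) :
    Tendsto (fun a : ℝ => -((a - c + 1/r) * exp (-(r*a)))) atTop (𝓝 0) := by
  have h1 : Tendsto (fun a : ℝ => r * a) atTop atTop := Tendsto.const_mul_atTop hr tendsto_id
  have h2 : Tendsto (fun a : ℝ => (r*a) * exp (-(r*a))) atTop (𝓝 0) := by
    have := (tendsto_pow_mul_exp_neg_atTop_nhds_zero 1).comp h1
    simpa [Function.comp_def] using this
  have h3 : Tendsto (fun a : ℝ => a * exp (-(r*a))) atTop (𝓝 0) := by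
    have := h2.const_mul (1/r)
    simp only [mul_zero] at this
    refine this.congr fun a => ?_
    field_simp
  have h4 : Tendsto (fun a : ℝ => exp (-(r*a))) atTop (𝓝 0) := by
    have := (tendsto_neg_exp hr).neg
    simpa using this
  have := ((h3.add ((h4.const_mul (1/r - c)))).neg)
  simp only [mul_zero, add_zero, neg_zero, zero_add] at this
  refine this.congr fun a => ?_
  ring

lemma V2 (hr : 0 < (r:ℝ)) (c : ℝ) :
    ∫ t in Ioi c, (t - c) * (r * exp (-(r*t))) = exp (-(r*c)) / r := by
  have := integral_Ioi_of_hasDerivAt_of_nonneg' (a := c)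
    (g := fun a => -((a - c + 1/r) * exp (-(r*a)))) (g' := fun t => (t - c) * (r * exp (-(r*t))))
    (fun t _ => V2deriv hr c t)
    (fun t ht => by
      have h1 : 0 ≤ t - c := by simp at ht; linarith
      positivity) (V2tendsto hr c)
  rw [this]
  field_simp
  ring

lemma I2 (hr : 0 < (r:ℝ)) (c : ℝ) :
    IntegrableOn (fun t => (t - c) * (r * exp (-(r*t)))) (Ioi c) :=
  integrableOn_Ioi_deriv_of_nonneg' (fun t _ => V2deriv hr c t)
    (fun t ht => by
      have h1 : 0 ≤ t - c := by simp at ht; linarith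
      positivity) (V2tendsto hr c)


lemma expMeasure_eq (r : ℝ) :
    expMeasure r = volume.withDensity (fun t => ((exponentialPDFReal r t).toNNReal : ℝ≥0∞)) := by
  rfl

lemma integral_expMeasure (hr : 0 < (r:ℝ)) (f : ℝ → ℝ) :
    ∫ t, f t ∂(expMeasure r) = ∫ t in Ioi 0, (r * exp (-(r*t))) * f t := by
  have hd : Measurable fun t => (exponentialPDFReal r t).toNNReal :=
    (measurable_exponentialPDFReal r).real_toNNReal
  rw [expMeasure_eq, integral_withDensity_eq_integral_smul hd]
  rw [← integral_Ici_eq_integral_Ioi,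
    ← setIntegral_eq_integral_of_forall_compl_eq_zero
      (s := Ici (0:ℝ)) (f := fun t => (exponentialPDFReal r t).toNNReal • f t) ?_]
  · refine setIntegral_congr_fun measurableSet_Ici fun t ht => ?_
    have : exponentialPDFReal r t = r * exp (-(r*t)) := by
      rw [exponentialPDFReal, gammaPDFReal]
      simp only [rpow_one, Gamma_one, div_one, sub_self, rpow_zero, mul_one, if_pos (mem_Ici.mp ht)]
    rw [NNReal.smul_def, smul_eq_mul, Real.coe_toNNReal _ (by rw [this]; positivity), this]
  · intro t ht
    have h0 : exponentialPDFReal r t = 0 := by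
      rw [exponentialPDFReal, gammaPDFReal, if_neg (by simpa using ht)]
    simp [h0]

lemma integrable_expMeasure (hr : 0 < (r:ℝ)) {f : ℝ → ℝ}
    (h : IntegrableOn (fun t => (r * exp (-(r*t))) * f t) (Ioi 0)) :
    Integrable f (expMeasure r) := by
  have hd : Measurable (exponentialPDF r) := by
    exact (measurable_exponentialPDFReal r).ennreal_ofReal
  rw [show expMeasure r = volume.withDensity (exponentialPDF r) from rfl,
    integrable_withDensity_iff hd (ae_of_all _ fun t => ENNReal.ofReal_lt_top)]
  have : (fun t => f t * (exponentialPDF r t).toReal)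
      = Set.indicator (Ici 0) (fun t => (r * exp (-(r*t))) * f t) := by
    funext t
    rw [exponentialPDF_eq]
    by_cases ht : 0 ≤ t
    · rw [if_pos ht, Set.indicator_of_mem (mem_Ici.mpr ht),
        ENNReal.toReal_ofReal (by positivity)]
      ring
    · rw [if_neg ht, Set.indicator_of_notMem (by simpa using ht)]
      simp
  rw [this, integrable_indicator_iff measurableSet_Ici]
  rwa [IntegrableOn, ← MeasureTheory.restrict_Ioi_eq_restrict_Ici]


lemma expMeasure_Iio_zero {r : ℝ} : expMeasure r (Iio 0) = 0 := by
  rw [show expMeasure r = volume.withDensity (exponentialPDF r) from rfl,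
    withDensity_apply _ measurableSet_Iio]
  simpa using lintegral_exponentialPDF_of_nonpos (r := r) (le_refl (0:ℝ))

lemma ae_nonneg_expMeasure {r : ℝ} : ∀ᵐ t ∂(expMeasure r), 0 ≤ t := by
  rw [ae_iff]
  convert expMeasure_Iio_zero (r := r) using 2
  ext t; simp [not_le]

-- mean
lemma N1int {r : ℝ} (hr : 0 < r) : Integrable (fun t => t) (expMeasure r) := by
  refine integrable_expMeasure hr ?_
  have := I2 hr 0
  refine this.congr_fun (fun t _ => by ring) measurableSet_Ioi |>.congr_set_ae ?_
  rfl

lemma N1 {r : ℝ} (hr : 0 < r) : ∫ t, t ∂(expMeasure r) = 1/r := by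
  rw [integral_expMeasure hr]
  have : ∀ t : ℝ, (r * exp (-(r*t))) * t = (t - 0) * (r * exp (-(r*t))) := fun t => by ring
  rw [setIntegral_congr_fun measurableSet_Ioi (fun t _ => this t), V2 hr 0]
  simp

-- tail indicator
lemma N0 {r : ℝ} (hr : 0 < r) {c : ℝ} (hc : 0 ≤ c) :
    ∫ t, (if c < t then (1:ℝ) else 0) ∂(expMeasure r) = exp (-(r*c)) := by
  rw [integral_expMeasure hr]
  have heq : ∀ t ∈ Ioi (0:ℝ), (r * exp (-(r*t))) * (if c < t then (1:ℝ) else 0)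
      = (Ioi c).indicator (fun t => r * exp (-(r*t))) t := by
    intro t _
    by_cases h : c < t <;> simp [h, Set.indicator_apply, mem_Ioi]
  rw [setIntegral_congr_fun measurableSet_Ioi heq, setIntegral_indicator measurableSet_Ioi,
    Ioi_inter_Ioi, max_eq_right hc, V1 hr c]

lemma N0int {r : ℝ} (hr : 0 < r) (c : ℝ) :
    Integrable (fun t => (if c < t then (1:ℝ) else 0)) (expMeasure r) := by
  haveI := isProbabilityMeasure_expMeasure hr
  refine Integrable.mono' (integrable_const 1) ?_ (ae_of_all _ fun t => ?_)
  · exact (Measurable.ite (measurableSet_lt measurable_const measurable_id)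
      measurable_const measurable_const).aestronglyMeasurable
  · by_cases h : c < t <;> simp [h]

-- shifted tail
lemma N3 {r : ℝ} (hr : 0 < r) {s : ℝ} (hs : 0 ≤ s) :
    ∫ t, (if s < t then t - s else 0) ∂(expMeasure r) = exp (-(r*s)) / r := by
  rw [integral_expMeasure hr]
  have heq : ∀ t ∈ Ioi (0:ℝ), (r * exp (-(r*t))) * (if s < t then t - s else 0)
      = (Ioi s).indicator (fun t => (t - s) * (r * exp (-(r*t)))) t := by
    intro t _
    by_cases h : s < t <;> simp [h, Set.indicator_apply, mem_Ioi] <;> ring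
  rw [setIntegral_congr_fun measurableSet_Ioi heq, setIntegral_indicator measurableSet_Ioi,
    Ioi_inter_Ioi, max_eq_right hs, V2 hr s]

lemma N3int {r : ℝ} (hr : 0 < r) {s : ℝ} (hs : 0 ≤ s) :
    Integrable (fun t => (if s < t then t - s else 0)) (expMeasure r) := by
  refine integrable_expMeasure hr ?_
  have heq : ∀ t ∈ Ioi (0:ℝ), (r * exp (-(r*t))) * (if s < t then t - s else 0)
      = (Ioi s).indicator (fun t => (t - s) * (r * exp (-(r*t)))) t := by
    intro t _
    by_cases h : s < t <;> simp [h, Set.indicator_apply, mem_Ioi] <;> ring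
  refine IntegrableOn.congr_fun ?_ (fun t ht => (heq t ht).symm) measurableSet_Ioi
  rw [IntegrableOn, integrable_indicator_iff measurableSet_Ioi, IntegrableOn,
    Measure.restrict_restrict measurableSet_Ioi]
  exact (I2 hr s).mono_set inter_subset_left

-- min with constant
lemma N2 {r : ℝ} (hr : 0 < r) {c : ℝ} (hc : 0 ≤ c) :
    ∫ t, min t c ∂(expMeasure r) = (1 - exp (-(r*c))) / r := by
  have hmin : ∀ t : ℝ, min t c = t - (if c < t then t - c else 0) := by
    intro t
    rcases le_or_gt t c with h | h
    · simp [min_eq_left h, not_lt.mpr h]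
    · simp [min_eq_right h.le, h]
  simp_rw [hmin]
  rw [integral_sub (N1int hr) (N3int hr hc), N1 hr, N3 hr hc]
  ring

lemma N2int {r : ℝ} (hr : 0 < r) {c : ℝ} (hc : 0 ≤ c) :
    Integrable (fun t => min t c) (expMeasure r) := by
  haveI := isProbabilityMeasure_expMeasure hr
  refine Integrable.mono' (integrable_const c) ?_ ?_
  · exact (measurable_id.min measurable_const).aestronglyMeasurable
  · filter_upwards [ae_nonneg_expMeasure (r := r)] with t ht
    rw [Real.norm_eq_abs, abs_of_nonneg (le_min ht hc)]
    exact min_le_right _ _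


lemma N5deriv {r : ℝ} (hr : 0 < r) (c t : ℝ) :
    HasDerivAt (fun a : ℝ => -exp (-(r*a))/r + exp (r*c-2*r*a)/(2*r))
      ((r * exp (-(r*t))) * ((1 - exp (-(r*(t-c))))/r)) t := by
  have h1 : HasDerivAt (fun a : ℝ => -(r*a)) (-r) t := by
    simpa using ((hasDerivAt_id t).const_mul (-r))
  have h2 : HasDerivAt (fun a : ℝ => r*c-2*r*a) (-(2*r)) t := by
    have h := ((hasDerivAt_id t).const_mul (-(2*r))).add_const (r*c)
    simp only [id_eq, mul_one] at h
    have hfe : (fun x : ℝ => -(2*r) * x + r*c) = fun a : ℝ => r*c-2*r*a := by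
      funext a; ring
    rwa [hfe] at h
  have := ((h1.exp.neg.div_const r).add (h2.exp.div_const (2*r)))
  refine this.congr_deriv ?_
  rw [show r*c-2*r*t = -(r*t) + -(r*(t-c)) from by ring, Real.exp_add]
  field_simp
  ring

lemma N5tendsto {r : ℝ} (hr : 0 < r) (c : ℝ) :
    Tendsto (fun a : ℝ => -exp (-(r*a))/r + exp (r*c-2*r*a)/(2*r)) atTop (𝓝 0) := by
  have h1 : Tendsto (fun a : ℝ => r * a) atTop atTop := Tendsto.const_mul_atTop hr tendsto_id
  have h4 : Tendsto (fun a : ℝ => exp (-(r*a))) atTop (𝓝 0) :=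
    (tendsto_exp_neg_atTop_nhds_zero.comp h1).congr fun a => rfl
  have h2 : Tendsto (fun a : ℝ => 2*r*a - r*c) atTop atTop :=
    tendsto_atTop_add_const_right atTop (-(r*c)) (Tendsto.const_mul_atTop (by positivity) tendsto_id)
  have h5 : Tendsto (fun a : ℝ => exp (r*c-2*r*a)) atTop (𝓝 0) := by
    refine (tendsto_exp_neg_atTop_nhds_zero.comp h2).congr fun a => ?_
    simp [Function.comp]
  have := ((h4.neg.div_const r).add (h5.div_const (2*r)))
  simpa using this

lemma N5 {r : ℝ} (hr : 0 < r) {c : ℝ} (hc : 0 ≤ c) :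
    ∫ a, (if c < a then (1 - exp (-(r*(a-c))))/r else 0) ∂(expMeasure r)
      = exp (-(r*c)) / (2*r) := by
  rw [integral_expMeasure hr]
  have heq : ∀ t ∈ Ioi (0:ℝ), (r * exp (-(r*t))) * (if c < t then (1 - exp (-(r*(t-c))))/r else 0)
      = (Ioi c).indicator (fun t => (r * exp (-(r*t))) * ((1 - exp (-(r*(t-c))))/r)) t := by
    intro t _
    by_cases h : c < t <;> simp [h, Set.indicator_apply, mem_Ioi]
  rw [setIntegral_congr_fun measurableSet_Ioi heq, setIntegral_indicator measurableSet_Ioi,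
    Ioi_inter_Ioi, max_eq_right hc]
  have key := integral_Ioi_of_hasDerivAt_of_nonneg' (a := c)
    (g := fun a : ℝ => -exp (-(r*a))/r + exp (r*c-2*r*a)/(2*r))
    (g' := fun t => (r * exp (-(r*t))) * ((1 - exp (-(r*(t-c))))/r))
    (fun t _ => N5deriv hr c t)
    (fun t ht => by
      have h1 : exp (-(r*(t-c))) ≤ 1 := by
        rw [exp_le_one_iff]
        have h' : c < t := ht
        nlinarith
      have h2 : (0:ℝ) ≤ r * exp (-(r*t)) := by positivity
      exact mul_nonneg h2 (div_nonneg (by linarith) hr.le))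
    (N5tendsto hr c)
  have harg : r*c-2*r*c = -(r*c) := by ring
  rw [key]
  simp only [harg]
  field_simp
  ring

lemma N5int {r : ℝ} (hr : 0 < r) (c : ℝ) :
    Integrable (fun a => (if c < a then (1 - exp (-(r*(a-c))))/r else 0)) (expMeasure r) := by
  haveI := isProbabilityMeasure_expMeasure hr
  refine Integrable.mono' (integrable_const (1/r)) ?_ (ae_of_all _ fun t => ?_)
  · refine Measurable.aestronglyMeasurable ?_
    refine Measurable.ite (measurableSet_lt measurable_const measurable_id) ?_ measurable_const
    fun_prop
  · by_cases h : c < t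
    · simp only [if_pos h]
      have he1 : exp (-(r*(t-c))) ≤ 1 := by
        rw [exp_le_one_iff]; nlinarith
      have he0 : (0:ℝ) < exp (-(r*(t-c))) := exp_pos _
      rw [Real.norm_eq_abs, abs_of_nonneg (div_nonneg (by linarith) hr.le)]
      gcongr
      linarith
    · simp only [if_neg h, norm_zero]
      positivity

lemma N7 {r : ℝ} (hr : 0 < r) {c : ℝ} (hc : 0 ≤ c) {p : ℝ} (hpr : p ≠ r) :
    ∫ a, (if a ≤ c then exp (p*a) else 0) ∂(expMeasure r)
      = r * (exp ((p-r)*c) - 1) / (p-r) := by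
  rw [integral_expMeasure hr]
  have heq : ∀ t ∈ Ioi (0:ℝ), (r * exp (-(r*t))) * (if t ≤ c then exp (p*t) else 0)
      = (Iic c).indicator (fun t => r * exp ((p-r)*t)) t := by
    intro t _
    by_cases h : t ≤ c
    · simp only [if_pos h, Set.indicator_of_mem (mem_Iic.mpr h), mul_assoc, ← Real.exp_add,
        show ∀ t:ℝ, -(r*t) + p*t = (p-r)*t from fun t => by ring]
    · simp [h, Set.indicator_apply, mem_Iic]
  rw [setIntegral_congr_fun measurableSet_Ioi heq, setIntegral_indicator measurableSet_Iic,
    Ioi_inter_Iic, ← intervalIntegral.integral_of_le hc]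
  have hd : ∀ t ∈ uIcc (0:ℝ) c, HasDerivAt (fun a => r * exp ((p-r)*a) / (p-r))
      (r * exp ((p-r)*t)) t := by
    intro t _
    have h1 : HasDerivAt (fun a : ℝ => (p-r)*a) (p-r) t := by
      simpa using (hasDerivAt_id t).const_mul (p-r)
    have := (h1.exp.const_mul r).div_const (p-r)
    refine this.congr_deriv ?_
    field_simp [sub_ne_zero.mpr hpr]
  rw [intervalIntegral.integral_eq_sub_of_hasDerivAt hd
    (Continuous.intervalIntegrable (by fun_prop) 0 c)]
  simp only [mul_zero, Real.exp_zero, mul_one]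
  ring

lemma N7int {r : ℝ} (hr : 0 < r) {c : ℝ} (hc : 0 ≤ c) (p : ℝ) :
    Integrable (fun a => (if a ≤ c then exp (p*a) else 0)) (expMeasure r) := by
  haveI := isProbabilityMeasure_expMeasure hr
  refine Integrable.mono' (integrable_const (exp (|p| * c))) ?_ ?_
  · refine Measurable.aestronglyMeasurable ?_
    refine Measurable.ite (measurableSet_le measurable_id measurable_const) ?_ measurable_const
    fun_prop
  · filter_upwards [ae_nonneg_expMeasure (r := r)] with t ht
    by_cases h : t ≤ c
    · simp only [if_pos h, Real.norm_eq_abs, abs_exp, exp_le_exp]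
      nlinarith [le_abs_self p, abs_nonneg p]
    · simp only [if_neg h, norm_zero]
      positivity


noncomputable def Gfun (c : ℝ) : ℝ×ℝ → ℝ := fun p => if c < p.1 then min (p.1 - c) p.2 else 0
noncomputable def Hfun (δ Δ c : ℝ) : ℝ×ℝ → ℝ :=
  fun p => if p.1 ≤ c ∧ Δ - (1-δ)*p.1 < δ*p.2 then (1-δ)*p.1 + δ*p.2 - Δ else 0
noncomputable def F1fun (δ c : ℝ) : ℝ×ℝ → ℝ :=
  fun p => (if c < p.1 then (1:ℝ) else 0) * (δ * p.2)

lemma measurable_Gfun (c : ℝ) : Measurable (Gfun c) := by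
  unfold Gfun
  exact Measurable.ite (measurableSet_lt measurable_const measurable_fst)
    ((measurable_fst.sub measurable_const).min measurable_snd) measurable_const

lemma measurable_Hfun (δ Δ c : ℝ) : Measurable (Hfun δ Δ c) := by
  unfold Hfun
  refine Measurable.ite ?_ (by fun_prop) measurable_const
  exact (measurableSet_le measurable_fst measurable_const).inter
    (measurableSet_lt (measurable_const.sub (measurable_fst.const_mul _))
      (measurable_snd.const_mul _))

lemma measurable_F1fun (δ c : ℝ) : Measurable (F1fun δ c) := by
  unfold F1fun
  exact (Measurable.ite (measurableSet_lt measurable_const measurable_fst)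
    measurable_const measurable_const).mul (by fun_prop)

lemma integrable_snd_mul {r : ℝ} (hr : 0 < r) (K : ℝ) :
    Integrable (fun p : ℝ×ℝ => K * |p.2|) ((expMeasure r).prod (expMeasure r)) := by
  haveI := isProbabilityMeasure_expMeasure hr
  have hg : Integrable (fun t : ℝ => K * |t|) (expMeasure r) := ((N1int hr).abs.const_mul K)
  have hsnd : (((expMeasure r).prod (expMeasure r)).map Prod.snd) = expMeasure r := by
    rw [Measure.map_snd_prod]; simp
  have := (integrable_map_measure (f := Prod.snd)
    (by rw [hsnd]; exact hg.aestronglyMeasurable) measurable_snd.aemeasurable).mp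
    (by rw [hsnd]; exact hg)
  exact this

lemma prod_integrable {r : ℝ} (hr : 0 < r) {F : ℝ×ℝ → ℝ} (hF : Measurable F) {K : ℝ}
    (hbd : ∀ p, |F p| ≤ K * |p.2|) :
    Integrable F ((expMeasure r).prod (expMeasure r)) :=
  Integrable.mono' (integrable_snd_mul hr K) hF.aestronglyMeasurable
    (ae_of_all _ fun p => by rw [Real.norm_eq_abs]; exact hbd p)

lemma Gfun_bound (c : ℝ) : ∀ p, |Gfun c p| ≤ 1 * |p.2| := by
  intro p
  rw [one_mul]
  unfold Gfun
  by_cases h : c < p.1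
  · rw [if_pos h, abs_le]
    constructor
    · rcases le_total (p.1 - c) p.2 with h2 | h2
      · rw [min_eq_left h2]
        have h3 : (0:ℝ) ≤ p.1 - c := by linarith
        linarith [abs_nonneg p.2]
      · rw [min_eq_right h2]; exact neg_abs_le p.2
    · exact le_trans (min_le_right _ _) (le_abs_self _)
  · rw [if_neg h]; simp [abs_nonneg]

lemma Hfun_bound {δ Δ c : ℝ} (hδ0 : 0 < δ) (h1δ : 0 < 1-δ) (hΔc : (1-δ)*c = Δ) :
    ∀ p, |Hfun δ Δ c p| ≤ δ * |p.2| := by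
  intro p
  unfold Hfun
  by_cases h : p.1 ≤ c ∧ Δ - (1-δ)*p.1 < δ*p.2
  · rw [if_pos h]
    obtain ⟨h1, h2⟩ := h
    have hnn : 0 ≤ Δ - (1-δ)*p.1 := by nlinarith
    rw [abs_of_nonneg (by linarith)]
    have : δ * p.2 ≤ δ * |p.2| := by
      have := le_abs_self p.2; nlinarith
    linarith
  · rw [if_neg h]; simp; positivity

lemma F1fun_bound' (δ c : ℝ) : ∀ p, |F1fun δ c p| ≤ |δ| * |p.2| := by
  intro p
  unfold F1fun
  by_cases h : c < p.1
  · rw [if_pos h, one_mul, abs_mul]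
  · rw [if_neg h, zero_mul, abs_zero]
    positivity

lemma F1fun_bound {δ c : ℝ} (hδ0 : 0 ≤ δ) : ∀ p, |F1fun δ c p| ≤ δ * |p.2| := by
  intro p
  unfold F1fun
  by_cases h : c < p.1
  · rw [if_pos h, one_mul, abs_mul, abs_of_nonneg hδ0]
  · rw [if_neg h, zero_mul]
    simp
    positivity

-- evaluation of the G integral
lemma Gfun_eval {r c : ℝ} (hr : 0 < r) (hc : 0 ≤ c) :
    ∫ p, Gfun c p ∂((expMeasure r).prod (expMeasure r)) = exp (-(r*c)) / (2*r) := by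
  haveI := isProbabilityMeasure_expMeasure hr
  rw [integral_prod _ (prod_integrable hr (measurable_Gfun c) (Gfun_bound c))]
  have hinner : ∀ a : ℝ, ∫ b, Gfun c (a, b) ∂(expMeasure r)
      = (if c < a then (1 - exp (-(r*(a-c))))/r else 0) := by
    intro a
    by_cases h : c < a
    · simp only [Gfun, if_pos h]
      rw [← N2 hr (c := a - c) (by linarith)]
      exact integral_congr_ae (ae_of_all _ fun b => min_comm _ _)
    · simp [Gfun, h]
  rw [integral_congr_ae (ae_of_all _ fun a => hinner a), N5 hr hc]

-- evaluation of the F1 integral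
lemma F1fun_eval {r δ c : ℝ} (hr : 0 < r) (hc : 0 ≤ c) :
    ∫ p, F1fun δ c p ∂((expMeasure r).prod (expMeasure r))
      = δ * (1/r) * exp (-(r*c)) := by
  haveI := isProbabilityMeasure_expMeasure hr
  rw [integral_prod _ (prod_integrable hr (measurable_F1fun δ c) (F1fun_bound' δ c))]
  have hinner : ∀ a : ℝ, ∫ b, F1fun δ c (a, b) ∂(expMeasure r)
      = (if c < a then (1:ℝ) else 0) * (δ * (1/r)) := by
    intro a
    simp only [F1fun]
    rw [integral_const_mul ((if c < a then (1:ℝ) else 0)) (fun b => δ * b),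
      integral_const_mul δ (fun b => b), N1 hr]
  rw [integral_congr_ae (ae_of_all _ fun a => hinner a)]
  rw [integral_mul_const, N0 hr hc]
  ring


lemma Hfun_eval {r δ Δ c : ℝ} (hr : 0 < r) (hδ0 : 0 < δ) (h1δ : 0 < 1-δ)
    (hδhalf : δ ≠ 1/2) (hc : 0 ≤ c) (hΔc : (1-δ)*c = Δ) :
    ∫ p, Hfun δ Δ c p ∂((expMeasure r).prod (expMeasure r))
      = (δ/r) * exp (-(r*Δ/δ)) *
          (r * (exp ((r*(1-δ)/δ - r)*c) - 1) / (r*(1-δ)/δ - r)) := by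
  haveI := isProbabilityMeasure_expMeasure hr
  rw [integral_prod _ (prod_integrable hr (measurable_Hfun δ Δ c) (Hfun_bound hδ0 h1δ hΔc))]
  have hinner : ∀ a : ℝ, ∫ t, Hfun δ Δ c (a, t) ∂(expMeasure r)
      = if a ≤ c then (δ/r) * exp (-(r*Δ/δ)) * exp ((r*(1-δ)/δ) * a) else 0 := by
    intro a
    by_cases h : a ≤ c
    · have hpt : ∀ t : ℝ, Hfun δ Δ c (a, t)
          = δ * (if (Δ - (1-δ)*a)/δ < t then t - (Δ - (1-δ)*a)/δ else 0) := by
        intro t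
        simp only [Hfun]
        by_cases h2 : (Δ - (1-δ)*a)/δ < t
        · rw [if_pos ⟨h, by rw [div_lt_iff₀ hδ0] at h2; linarith [h2]⟩, if_pos h2]
          field_simp
          ring
        · rw [if_neg, if_neg h2]
          · ring
          · rintro ⟨-, h3⟩
            exact h2 (by rw [div_lt_iff₀ hδ0]; linarith)
        done
      rw [integral_congr_ae (ae_of_all _ hpt), integral_const_mul,
        N3 hr (s := (Δ - (1-δ)*a)/δ) (div_nonneg (by nlinarith) hδ0.le), if_pos h]
      rw [show -(r*((Δ - (1-δ)*a)/δ)) = -(r*Δ/δ) + (r*(1-δ)/δ)*a from by field_simp; ring,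
        Real.exp_add]
      ring
    · have hpt : ∀ t : ℝ, Hfun δ Δ c (a, t) = 0 := by
        intro t
        simp only [Hfun]
        rw [if_neg]
        rintro ⟨h1, -⟩
        exact h h1
      rw [integral_congr_ae (ae_of_all _ hpt), integral_zero, if_neg h]
  rw [integral_congr_ae (ae_of_all _ fun a => hinner a)]
  have : ∀ a : ℝ, (if a ≤ c then (δ/r) * exp (-(r*Δ/δ)) * exp ((r*(1-δ)/δ) * a) else 0)
      = ((δ/r) * exp (-(r*Δ/δ))) * (if a ≤ c then exp ((r*(1-δ)/δ) * a) else 0) := by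
    intro a
    by_cases h : a ≤ c <;> simp [h]
  rw [integral_congr_ae (ae_of_all _ this), integral_const_mul,
    N7 hr hc (p := r*(1-δ)/δ) (by
      intro hcon
      have hr' : r ≠ 0 := ne_of_gt hr
      field_simp at hcon
      exact hδhalf (by linarith))]

lemma ident1 {δ Δ c xv yv zv : ℝ} (h1δ : 0 < 1-δ) (hΔc : (1-δ)*c = Δ) (hy : 0 ≤ yv) :
    min ((1-δ)*xv + δ*zv) (Δ + ((1-δ)*yv + δ*zv))
      = δ*zv + (1-δ)*min xv c + (1-δ)*(if c < xv then min (xv - c) yv else 0) := by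
  subst hΔc
  rcases le_or_gt xv c with h | h
  · rw [if_neg (not_lt.mpr h), min_eq_left (by nlinarith), min_eq_left h]; ring
  · rw [if_pos h, min_eq_right h.le]
    rcases le_total (xv - c) yv with h2 | h2
    · rw [min_eq_left (by nlinarith), min_eq_left h2]; ring
    · rw [min_eq_right (by nlinarith), min_eq_right h2]; ring

lemma ident2 {δ Δ c xv yv zv : ℝ} (hδ0 : 0 < δ) (h1δ : 0 < 1-δ) (hΔc : (1-δ)*c = Δ)
    (hy : 0 ≤ yv) (hz : 0 ≤ zv) :
    (if Δ < (1-δ)*xv + δ*zv then min ((1-δ)*xv + δ*zv - Δ) ((1-δ)*yv + δ*zv) else 0)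
      = (if c < xv then (1:ℝ) else 0) * (δ * zv)
        + (1-δ)*(if c < xv then min (xv - c) yv else 0)
        + (if xv ≤ c ∧ Δ - (1-δ)*xv < δ*zv then (1-δ)*xv + δ*zv - Δ else 0) := by
  subst hΔc
  rcases le_or_gt xv c with h | h
  · rw [if_neg (not_lt.mpr h), if_neg (not_lt.mpr h)]
    by_cases h2 : (1-δ)*c - (1-δ)*xv < δ*zv
    · rw [if_pos (by nlinarith), if_pos ⟨h, by nlinarith⟩, min_eq_left (by nlinarith)]
      ring
    · rw [if_neg (by intro hcon; exact h2 (by nlinarith)),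
        if_neg (by rintro ⟨-, hcon⟩; exact h2 (by nlinarith))]
      ring
  · have hev : (1-δ)*c < (1-δ)*xv + δ*zv := by nlinarith
    rw [if_pos hev, if_pos h, if_pos h,
      if_neg (by rintro ⟨h3, -⟩; exact absurd h3 (not_le.mpr h)), one_mul]
    rcases le_total (xv - c) yv with h2 | h2
    · rw [min_eq_left (by nlinarith), min_eq_left h2]; ring
    · rw [min_eq_right (by nlinarith), min_eq_right h2]; ring


/-- **Resource usage under correlated replication with a deferred replica.**
Let `x, y, z` be i.i.d. exponential(μ) random variables, `δ ∈ (0,1)` with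
`δ ≠ 1/2`, and let `X₁ = (1−δ)x + δz` and `X₂ = (1−δ)y + δz` be the correlated
original and replica service times.  The replica is started only if the
original is still running after the replication offset `Δ ≥ 0`.  Then
(i) `E[min {X₁, Δ + X₂}] = (1/μ)(1 − ((1−δ)/2)·e^{−μΔ/(1−δ)})`;
(ii) `E[min {X₁ − Δ, X₂} · 1_{X₁ > Δ}]
      = (1/μ)((δ²/(2δ−1))·e^{−μΔ/δ} − ((1−δ)/(2(2δ−1)))·e^{−μΔ/(1−δ)})`;
hence (iii) for any arrival rate `λ > 0`, the resource usage `u = ρ₁ + ρ₂`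
equals `(λ/μ)(1 + (δ²/(2δ−1))·e^{−μΔ/δ} − (δ(1−δ)/(2δ−1))·e^{−μΔ/(1−δ)})`. -/
theorem deferred_replication_resource_usage_correlated
    {Ω : Type*} [MeasurableSpace Ω] (P : Measure Ω) [IsProbabilityMeasure P]
    (μ : ℝ) (hμ : 0 < μ) (δ : ℝ) (hδ0 : 0 < δ) (hδ1 : δ < 1) (hδhalf : δ ≠ 1 / 2)
    (Δ : ℝ) (hΔ : 0 ≤ Δ) (lam : ℝ) (hlam : 0 < lam)
    (x y z : Ω → ℝ)
    (hxmeas : Measurable x) (hymeas : Measurable y) (hzmeas : Measurable z)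
    (hlaw : ∀ w ∈ ({x, y, z} : Set (Ω → ℝ)), Measure.map w P = expMeasure μ)
    (hindep : iIndepFun ![x, y, z] P)
    (X₁ X₂ : Ω → ℝ)
    (hX₁ : X₁ = fun ω => (1 - δ) * x ω + δ * z ω)
    (hX₂ : X₂ = fun ω => (1 - δ) * y ω + δ * z ω) :
    (∫ ω, min (X₁ ω) (Δ + X₂ ω) ∂P =
        (1 / μ) * (1 - (1 - δ) / 2 * exp (-(μ * Δ / (1 - δ))))) ∧
      (∫ ω, (if Δ < X₁ ω then min (X₁ ω - Δ) (X₂ ω) else 0) ∂P =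
        (1 / μ) * (δ ^ 2 / (2 * δ - 1) * exp (-(μ * Δ / δ)) -
          (1 - δ) / (2 * (2 * δ - 1)) * exp (-(μ * Δ / (1 - δ))))) ∧
      lam * (∫ ω, min (X₁ ω) (Δ + X₂ ω) ∂P) +
          lam * (∫ ω, (if Δ < X₁ ω then min (X₁ ω - Δ) (X₂ ω) else 0) ∂P) =
        (lam / μ) * (1 + δ ^ 2 / (2 * δ - 1) * exp (-(μ * Δ / δ)) -
          δ * (1 - δ) / (2 * δ - 1) * exp (-(μ * Δ / (1 - δ)))) := by
  haveI hνP : IsProbabilityMeasure (expMeasure μ) := isProbabilityMeasure_expMeasure hμ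
  have h1δ : 0 < 1 - δ := by linarith
  have h2δ : 2 * δ - 1 ≠ 0 := fun h => hδhalf (by linarith)
  set c : ℝ := Δ / (1 - δ) with hcdef
  have hc : 0 ≤ c := div_nonneg hΔ h1δ.le
  have hΔc : (1 - δ) * c = Δ := by rw [hcdef]; field_simp
  have hlx : Measure.map x P = expMeasure μ := hlaw x (by simp)
  have hly : Measure.map y P = expMeasure μ := hlaw y (by simp)
  have hlz : Measure.map z P = expMeasure μ := hlaw z (by simp)
  have hxy : IndepFun x y P := by
    have := hindep.indepFun (i := 0) (j := 1) (by decide)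
    simpa using this
  have hxz : IndepFun x z P := by
    have := hindep.indepFun (i := 0) (j := 2) (by decide)
    simpa using this
  have hmxy : Measure.map (fun ω => (x ω, y ω)) P = (expMeasure μ).prod (expMeasure μ) := by
    have h := (indepFun_iff_map_prod_eq_prod_map_map hxmeas.aemeasurable hymeas.aemeasurable).mp hxy
    rw [hlx, hly] at h
    exact h
  have hmxz : Measure.map (fun ω => (x ω, z ω)) P = (expMeasure μ).prod (expMeasure μ) := by
    have h := (indepFun_iff_map_prod_eq_prod_map_map hxmeas.aemeasurable hzmeas.aemeasurable).mp hxz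
    rw [hlx, hlz] at h
    exact h
  have hy0 : ∀ᵐ ω ∂P, 0 ≤ y ω := by
    rw [ae_iff]
    refine measure_mono_null (t := y ⁻¹' (Iio 0))
      (fun ω hω => by simpa [mem_Iio] using not_le.mp hω) ?_
    rw [← Measure.map_apply hymeas measurableSet_Iio, hly]
    exact expMeasure_Iio_zero
  have hz0 : ∀ᵐ ω ∂P, 0 ≤ z ω := by
    rw [ae_iff]
    refine measure_mono_null (t := z ⁻¹' (Iio 0))
      (fun ω hω => by simpa [mem_Iio] using not_le.mp hω) ?_
    rw [← Measure.map_apply hzmeas measurableSet_Iio, hlz]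
    exact expMeasure_Iio_zero
  -- integrability and values of the pieces
  have hGint : Integrable (Gfun c) ((expMeasure μ).prod (expMeasure μ)) :=
    prod_integrable hμ (measurable_Gfun c) (Gfun_bound c)
  have hGintΩ : Integrable (fun ω => Gfun c (x ω, y ω)) P := by
    have h := (integrable_map_measure (f := fun ω => (x ω, y ω)) (g := Gfun c)
      (by rw [hmxy]; exact (measurable_Gfun c).aestronglyMeasurable)
      (hxmeas.aemeasurable.prodMk hymeas.aemeasurable)).mp (by rw [hmxy]; exact hGint)
    exact h
  have hGeq : ∫ ω, Gfun c (x ω, y ω) ∂P = exp (-(μ*c)) / (2*μ) := by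
    have h := integral_map (φ := fun ω => (x ω, y ω))
      (hxmeas.aemeasurable.prodMk hymeas.aemeasurable) (f := Gfun c)
      (by rw [hmxy]; exact (measurable_Gfun c).aestronglyMeasurable)
    rw [hmxy] at h
    rw [← h, Gfun_eval hμ hc]
  have hF1intΩ : Integrable (fun ω => F1fun δ c (x ω, z ω)) P := by
    have h := (integrable_map_measure (f := fun ω => (x ω, z ω)) (g := F1fun δ c)
      (by rw [hmxz]; exact (measurable_F1fun δ c).aestronglyMeasurable)
      (hxmeas.aemeasurable.prodMk hzmeas.aemeasurable)).mp
      (by rw [hmxz]; exact prod_integrable hμ (measurable_F1fun δ c) (F1fun_bound' δ c))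
    exact h
  have hF1eq : ∫ ω, F1fun δ c (x ω, z ω) ∂P = δ * (1/μ) * exp (-(μ*c)) := by
    have h := integral_map (φ := fun ω => (x ω, z ω))
      (hxmeas.aemeasurable.prodMk hzmeas.aemeasurable) (f := F1fun δ c)
      (by rw [hmxz]; exact (measurable_F1fun δ c).aestronglyMeasurable)
    rw [hmxz] at h
    rw [← h, F1fun_eval hμ hc]
  have hHintΩ : Integrable (fun ω => Hfun δ Δ c (x ω, z ω)) P := by
    have h := (integrable_map_measure (f := fun ω => (x ω, z ω)) (g := Hfun δ Δ c)
      (by rw [hmxz]; exact (measurable_Hfun δ Δ c).aestronglyMeasurable)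
      (hxmeas.aemeasurable.prodMk hzmeas.aemeasurable)).mp
      (by rw [hmxz]; exact prod_integrable hμ (measurable_Hfun δ Δ c) (Hfun_bound hδ0 h1δ hΔc))
    exact h
  have hHeq : ∫ ω, Hfun δ Δ c (x ω, z ω) ∂P
      = (δ/μ) * exp (-(μ*Δ/δ)) *
          (μ * (exp ((μ*(1-δ)/δ - μ)*c) - 1) / (μ*(1-δ)/δ - μ)) := by
    have h := integral_map (φ := fun ω => (x ω, z ω))
      (hxmeas.aemeasurable.prodMk hzmeas.aemeasurable) (f := Hfun δ Δ c)
      (by rw [hmxz]; exact (measurable_Hfun δ Δ c).aestronglyMeasurable)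
    rw [hmxz] at h
    rw [← h, Hfun_eval hμ hδ0 h1δ hδhalf hc hΔc]
  have hzintΩ : Integrable z P := by
    have h := (integrable_map_measure (f := z) (g := fun t : ℝ => t)
      (by rw [hlz]; exact measurable_id.aestronglyMeasurable) hzmeas.aemeasurable).mp
      (by rw [hlz]; exact N1int hμ)
    exact h
  have hzeq : ∫ ω, z ω ∂P = 1/μ := by
    have h := integral_map (φ := z) hzmeas.aemeasurable (f := fun t : ℝ => t)
      (by rw [hlz]; exact measurable_id.aestronglyMeasurable)
    rw [hlz] at h
    rw [← h, N1 hμ]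
  have hminintΩ : Integrable (fun ω => min (x ω) c) P := by
    have h := (integrable_map_measure (f := x) (g := fun t : ℝ => min t c)
      (by rw [hlx]; exact (measurable_id.min measurable_const).aestronglyMeasurable)
      hxmeas.aemeasurable).mp (by rw [hlx]; exact N2int hμ hc)
    exact h
  have hmineq : ∫ ω, min (x ω) c ∂P = (1 - exp (-(μ*c)))/μ := by
    have h := integral_map (φ := x) hxmeas.aemeasurable (f := fun t : ℝ => min t c)
      (by rw [hlx]; exact (measurable_id.min measurable_const).aestronglyMeasurable)
    rw [hlx] at h
    rw [← h, N2 hμ hc]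
  -- part (i)
  have hBc : exp (-(μ*c)) = exp (-(μ * Δ / (1 - δ))) := by
    congr 1
    rw [hcdef]
    field_simp
  have part1 : ∫ ω, min (X₁ ω) (Δ + X₂ ω) ∂P
      = δ*(1/μ) + ((1-δ)*((1 - exp (-(μ*c)))/μ) + (1-δ)*(exp (-(μ*c))/(2*μ))) := by
    have hae : (fun ω => min (X₁ ω) (Δ + X₂ ω)) =ᵐ[P]
        (fun ω => δ * z ω + ((1-δ) * min (x ω) c + (1-δ) * Gfun c (x ω, y ω))) := by
      filter_upwards [hy0] with ω hy
      simp only [hX₁, hX₂]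
      have := ident1 (δ := δ) (Δ := Δ) (c := c) (xv := x ω) (yv := y ω) (zv := z ω)
        h1δ hΔc hy
      simpa [Gfun, add_assoc] using this
    have hsum1 : Integrable (fun ω => (1-δ) * min (x ω) c + (1-δ) * Gfun c (x ω, y ω)) P :=
      (hminintΩ.const_mul (1-δ)).add (hGintΩ.const_mul (1-δ))
    rw [integral_congr_ae hae,
      integral_add (hzintΩ.const_mul δ) hsum1,
      integral_add (hminintΩ.const_mul (1-δ)) (hGintΩ.const_mul (1-δ)),
      integral_const_mul δ z, integral_const_mul (1-δ) (fun ω => min (x ω) c),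
      integral_const_mul (1-δ) (fun ω => Gfun c (x ω, y ω)), hzeq, hmineq, hGeq]
  have goal1 : ∫ ω, min (X₁ ω) (Δ + X₂ ω) ∂P
      = (1 / μ) * (1 - (1 - δ) / 2 * exp (-(μ * Δ / (1 - δ)))) := by
    rw [part1, hBc]
    field_simp
    ring
  -- part (ii)
  have part2 : ∫ ω, (if Δ < X₁ ω then min (X₁ ω - Δ) (X₂ ω) else 0) ∂P
      = δ * (1/μ) * exp (-(μ*c))
        + ((1-δ) * (exp (-(μ*c)) / (2*μ))
        + (δ/μ) * exp (-(μ*Δ/δ)) *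
            (μ * (exp ((μ*(1-δ)/δ - μ)*c) - 1) / (μ*(1-δ)/δ - μ))) := by
    have hae : (fun ω => (if Δ < X₁ ω then min (X₁ ω - Δ) (X₂ ω) else 0)) =ᵐ[P]
        (fun ω => F1fun δ c (x ω, z ω)
          + ((1-δ) * Gfun c (x ω, y ω) + Hfun δ Δ c (x ω, z ω))) := by
      filter_upwards [hy0, hz0] with ω hy hz
      simp only [hX₁, hX₂]
      have := ident2 (δ := δ) (Δ := Δ) (c := c) (xv := x ω) (yv := y ω) (zv := z ω)
        hδ0 h1δ hΔc hy hz
      simpa [Gfun, Hfun, F1fun, add_assoc] using this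
    have hsum2 : Integrable (fun ω => (1-δ) * Gfun c (x ω, y ω) + Hfun δ Δ c (x ω, z ω)) P :=
      (hGintΩ.const_mul (1-δ)).add hHintΩ
    rw [integral_congr_ae hae,
      integral_add hF1intΩ hsum2,
      integral_add (hGintΩ.const_mul (1-δ)) hHintΩ,
      integral_const_mul (1-δ) (fun ω => Gfun c (x ω, y ω)), hF1eq, hGeq, hHeq]
  have hq : μ*(1-δ)/δ - μ ≠ 0 := by
    rw [show μ*(1-δ)/δ - μ = μ*(1-2*δ)/δ from by field_simp; ring]
    have h12 : (1 - 2*δ) ≠ 0 := fun h => hδhalf (by linarith)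
    exact div_ne_zero (mul_ne_zero hμ.ne' h12) hδ0.ne'
  have hAB : exp (-(μ*Δ/δ)) * exp ((μ*(1-δ)/δ - μ)*c) = exp (-(μ * Δ / (1 - δ))) := by
    rw [← Real.exp_add]
    congr 1
    rw [hcdef]
    field_simp
    ring
  have h12 : (1 - 2*δ) ≠ 0 := fun h => hδhalf (by linarith)
  have hqval : μ*(1-δ)/δ - μ = μ*(1-2*δ)/δ := by field_simp; ring
  have T3 : (δ/μ) * exp (-(μ*Δ/δ)) *
        (μ * (exp ((μ*(1-δ)/δ - μ)*c) - 1) / (μ*(1-δ)/δ - μ))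
      = δ^2/(μ*(1-2*δ)) *
          (exp (-(μ*Δ/δ)) * exp ((μ*(1-δ)/δ - μ)*c) - exp (-(μ*Δ/δ))) := by
    rw [hqval]
    generalize exp (-(μ*Δ/δ)) = A
    generalize exp ((μ*(1-2*δ)/δ)*c) = X
    field_simp
  have goal2 : ∫ ω, (if Δ < X₁ ω then min (X₁ ω - Δ) (X₂ ω) else 0) ∂P
      = (1 / μ) * (δ ^ 2 / (2 * δ - 1) * exp (-(μ * Δ / δ)) -
          (1 - δ) / (2 * (2 * δ - 1)) * exp (-(μ * Δ / (1 - δ)))) := by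
    rw [part2, hBc, T3, hAB]
    generalize exp (-(μ * Δ / δ)) = A
    generalize exp (-(μ * Δ / (1 - δ))) = B
    rw [show (1:ℝ) - 2*δ = -(2*δ-1) by ring]
    field_simp
    linear_combination (-(B * (δ + 1))) * mul_inv_cancel₀ (show (-1 + δ * 2) ≠ 0 by contrapose! h2δ; linarith)
  refine ⟨goal1, goal2, ?_⟩
  rw [goal1, goal2]
  generalize exp (-(μ * Δ / δ)) = A
  generalize exp (-(μ * Δ / (1 - δ))) = B
  field_simp
  linear_combination (B * (1 - δ)) * mul_inv_cancel₀ (show (-1 + δ * 2) ≠ 0 by contrapose! h2δ; linarith)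
end
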